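/- Let (E,d) be a metric space and let α > 1 be a countable ordinal. Suppose that for every ordinal β with 0 < β < α, every natural number p, and every compact countable subset K̃ of E with Cantor–Bendixson characteristic (β,p), the subspace K̃ is homeomorphic to the ordinal ω^β·p + 1 with its order topology. Then every compact countable subset K of E with Cantor–Bendixson characteristic (α,1) is homeomorphic to the ordinal ω^α + 1 with its order topology. -/

import Mathlib

open Ordinal Set

/-- The `α`-th Cantor–Bendixson derivative of a set `A`, defined by transfinite
recursion: `A^(0) = A`, `A^(β+1) = (A^(β))'` (derived set in the ambient space),
and `A^(λ) = ⋂_{γ<λ} A^(γ)` at nonzero limit ordinals. -/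
noncomputable def cbDeriv {X : Type*} [TopologicalSpace X] (A : Set X) (o : Ordinal) : Set X :=
  Ordinal.limitRecOn o A (fun _ ih => derivedSet ih)
    (fun o _ ih => ⋂ (β : Ordinal) (h : β < o), ih β h)

/-- `A` has Cantor–Bendixson characteristic `(α, p)`: `α` is the least ordinal such
that the `α`-th Cantor–Bendixson derivative of `A` is finite, and that derivative has
exactly `p` elements. -/
def HasCBChar {X : Type*} [TopologicalSpace X] (A : Set X) (α : Ordinal) (p : ℕ) : Prop :=
  (cbDeriv A α).Finite ∧ (∀ β < α, ¬ (cbDeriv A β).Finite) ∧ (cbDeriv A α).ncard = p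

open Filter Topology

section basics
variable {X : Type*} [TopologicalSpace X]

theorem cbDeriv_zero (A : Set X) : cbDeriv A 0 = A := Ordinal.limitRecOn_zero ..

theorem cbDeriv_succ (A : Set X) (o : Ordinal) :
    cbDeriv A (Order.succ o) = derivedSet (cbDeriv A o) := Ordinal.limitRecOn_succ ..

theorem cbDeriv_limit (A : Set X) {o : Ordinal} (ho : Order.IsSuccLimit o) :
    cbDeriv A o = ⋂ (β : Ordinal) (_ : β < o), cbDeriv A β := Ordinal.limitRecOn_limit _ _ _ _ ho

variable [T1Space X]

theorem isClosed_cbDeriv_and_subset {A : Set X} (hA : IsClosed A) (o : Ordinal) :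
    IsClosed (cbDeriv A o) ∧ cbDeriv A o ⊆ A := by
  induction o using Ordinal.limitRecOn with
  | zero => rw [cbDeriv_zero]; exact ⟨hA, subset_rfl⟩
  | add_one o ih =>
    rw [Ordinal.add_one_eq_succ, cbDeriv_succ]
    exact ⟨isClosed_derivedSet _, ((derivedSet_subset_closure _).trans
      ih.1.closure_subset).trans ih.2⟩
  | limit o ho ih =>
    rw [cbDeriv_limit A ho]
    refine ⟨isClosed_iInter fun β => isClosed_iInter fun hβ => (ih β hβ).1, ?_⟩
    have h0 : ⋂ (β : Ordinal) (_ : β < o), cbDeriv A β ⊆ cbDeriv A 0 :=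
      biInter_subset_of_mem ho.pos
    rw [cbDeriv_zero] at h0
    exact h0

theorem isClosed_cbDeriv {A : Set X} (hA : IsClosed A) (o : Ordinal) :
    IsClosed (cbDeriv A o) := (isClosed_cbDeriv_and_subset hA o).1

theorem cbDeriv_subset {A : Set X} (hA : IsClosed A) (o : Ordinal) : cbDeriv A o ⊆ A :=
  (isClosed_cbDeriv_and_subset hA o).2

theorem cbDeriv_anti {A : Set X} (hA : IsClosed A) : ∀ {b c : Ordinal}, b ≤ c →
    cbDeriv A c ⊆ cbDeriv A b := by
  intro b c
  induction c using Ordinal.limitRecOn with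
  | zero => intro h; rw [nonpos_iff_eq_zero.mp h]
  | add_one c ih =>
    intro h
    rw [Ordinal.add_one_eq_succ] at h ⊢
    rcases (Order.le_succ_iff_eq_or_le.mp h) with rfl | h
    · rfl
    · refine subset_trans ?_ (ih h)
      rw [cbDeriv_succ]
      exact (derivedSet_subset_closure _).trans (isClosed_cbDeriv hA c).closure_subset
  | limit c hc ih =>
    intro h
    rcases eq_or_lt_of_le h with rfl | h
    · rfl
    · rw [cbDeriv_limit A hc]
      exact biInter_subset_of_mem h

theorem derivedSet_of_finite {A : Set X} (h : A.Finite) : derivedSet A = ∅ := by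
  ext x
  simp only [mem_derivedSet, mem_empty_iff_false, iff_false]
  rw [accPt_iff_nhds]
  push_neg
  refine ⟨(A \ {x})ᶜ, ((h.subset diff_subset).isClosed).isOpen_compl.mem_nhds ?_, ?_⟩
  · simp
  · intro y hy
    by_contra hne
    exact hy.1 ⟨hy.2, hne⟩

theorem derivedSet_inter_open {O : Set X} (hO : IsOpen O) (A : Set X) :
    derivedSet A ∩ O ⊆ derivedSet (A ∩ O) := by
  rintro x ⟨hx, hxO⟩
  rw [mem_derivedSet, accPt_iff_nhds] at hx ⊢
  intro U hU
  obtain ⟨y, ⟨hyU, hyA⟩, hyx⟩ := hx (U ∩ O) (inter_mem hU (hO.mem_nhds hxO))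
  exact ⟨y, ⟨hyU.1, hyA, hyU.2⟩, hyx⟩

/-- derived set of a relatively clopen trace -/
theorem derivedSet_trace {S O U : Set X} (hO : IsOpen O) (hU : IsClosed U)
    {A : Set X} (hA : IsClosed A) (hAS : A ⊆ S) (hEq : S ∩ O = S ∩ U) :
    derivedSet (A ∩ O) = derivedSet A ∩ O := by
  apply subset_antisymm
  · intro x hx
    have h1 : x ∈ derivedSet A := derivedSet_mono _ _ inter_subset_left hx
    have hAOU : A ∩ O = A ∩ U := by
      rw [← inter_eq_self_of_subset_left hAS, inter_assoc, inter_assoc, hEq]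
    have h2 : x ∈ A ∩ U := (hA.inter hU).closure_subset
      ((derivedSet_subset_closure _).trans (closure_mono hAOU.subset) hx)
    have h3 : x ∈ A ∩ O := by rwa [hAOU]
    exact ⟨h1, h3.2⟩
  · exact derivedSet_inter_open hO A

theorem cbDeriv_trace {S O U : Set X} (hS : IsClosed S) (hO : IsOpen O) (hU : IsClosed U)
    (hEq : S ∩ O = S ∩ U) : ∀ o, cbDeriv (S ∩ O) o = cbDeriv S o ∩ O := by
  have hSO : IsClosed (S ∩ O) := hEq ▸ hS.inter hU
  intro o
  induction o using Ordinal.limitRecOn with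
  | zero => rw [cbDeriv_zero, cbDeriv_zero]
  | add_one o ih =>
    rw [Ordinal.add_one_eq_succ, cbDeriv_succ, cbDeriv_succ, ih,
      derivedSet_trace hO hU (isClosed_cbDeriv hS o) (cbDeriv_subset hS o) hEq]
  | limit o ho ih =>
    rw [cbDeriv_limit _ ho, cbDeriv_limit _ ho]
    ext x
    simp only [mem_iInter, mem_inter_iff]
    constructor
    · intro h
      exact ⟨fun β hβ => ((ih β hβ) ▸ h β hβ).1, ((ih 0 ho.pos) ▸ h 0 ho.pos).2⟩
    · intro h β hβ
      rw [ih β hβ]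
      exact ⟨h.1 β hβ, h.2⟩

end basics

theorem cbDeriv_nonempty {E : Type*} [MetricSpace E] {A : Set E} (hA : IsCompact A)
    {o : Ordinal} (ho : o ≠ 0) (h : ∀ β < o, (cbDeriv A β).Infinite) :
    (cbDeriv A o).Nonempty := by
  induction o using Ordinal.limitRecOn with
  | zero => exact absurd rfl ho
  | add_one o ih =>
    rw [Ordinal.add_one_eq_succ] at h ⊢
    rw [cbDeriv_succ]
    have hinf : (cbDeriv A o).Infinite := h o (Order.lt_succ o)
    obtain ⟨x, _, hx⟩ := hinf.exists_accPt_of_subset_isCompact hA (cbDeriv_subset hA.isClosed o)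
    exact ⟨x, hx⟩
  | limit o hlim ih =>
    rw [cbDeriv_limit _ hlim]
    have : Nonempty {β : Ordinal // β < o} := ⟨⟨0, hlim.pos⟩⟩
    have key := IsCompact.nonempty_iInter_of_directed_nonempty_isCompact_isClosed
      (fun β : {β : Ordinal // β < o} => cbDeriv A β.1)
      ?_ ?_ ?_ ?_
    · rwa [← iInter_subtype (fun β => β < o) (fun β => cbDeriv A β.1)]
    · intro β γ
      rcases le_total β.1 γ.1 with hh | hh
      · exact ⟨γ, cbDeriv_anti hA.isClosed hh, subset_rfl⟩
      · exact ⟨β, subset_rfl, cbDeriv_anti hA.isClosed hh⟩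
    · exact fun β => (h β.1 β.2).nonempty
    · exact fun β => hA.of_isClosed_subset (isClosed_cbDeriv hA.isClosed β.1)
        (cbDeriv_subset hA.isClosed β.1)
    · exact fun β => isClosed_cbDeriv hA.isClosed β.1

theorem cbDeriv_one {X : Type*} [TopologicalSpace X] (A : Set X) :
    cbDeriv A 1 = derivedSet A := by
  rw [← Ordinal.succ_zero, cbDeriv_succ, cbDeriv_zero]



theorem stmt3 {E : Type*} [MetricSpace E] (α : Ordinal) (hα : 1 < α) (hαcount : α < ω_ 1)
    (H : ∀ β : Ordinal, 0 < β → β < α → ∀ p : ℕ, ∀ K' : Set E,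
      IsCompact K' → K'.Countable → HasCBChar K' β p →
      Nonempty (↥K' ≃ₜ ↥(Set.Iic (ω ^ β * (p : Ordinal)))))
    (K : Set E) (hK : IsCompact K) (hKcount : K.Countable) (hchar : HasCBChar K α 1) :
    Nonempty (↥K ≃ₜ ↥(Set.Iic (ω ^ α))) := by
  classical
  obtain ⟨hfinα, hinfα, hcard⟩ := hchar
  obtain ⟨x₀, hx₀⟩ := Set.ncard_eq_one.mp hcard
  have hKcl : IsClosed K := hK.isClosed
  have hαpos : (0:Ordinal) < α := lt_trans zero_lt_one hα
  have hx₀mem : x₀ ∈ cbDeriv K α := hx₀ ▸ rfl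
  have hx₀K : x₀ ∈ K := cbDeriv_subset hKcl α hx₀mem
  -- x₀ is an accumulation point of `derivedSet K`
  have hx₀acc : ∀ ε : ℝ, 0 < ε → ∃ z, z ∈ derivedSet K ∧ z ≠ x₀ ∧ dist z x₀ < ε := by
    intro ε hε
    have h2 : x₀ ∈ cbDeriv K (Order.succ 1) :=
      cbDeriv_anti hKcl (Order.succ_le_of_lt hα) hx₀mem
    rw [cbDeriv_succ] at h2
    have h1 : cbDeriv K 1 = derivedSet K := by
      rw [← Ordinal.succ_zero, cbDeriv_succ, cbDeriv_zero]
    rw [h1, mem_derivedSet, accPt_iff_nhds] at h2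
    obtain ⟨z, ⟨hz1, hz2⟩, hz3⟩ := h2 (Metric.ball x₀ ε) (Metric.ball_mem_nhds x₀ hε)
    exact ⟨z, hz2, hz3, Metric.mem_ball.mp hz1⟩
  -- the countable set of distances to avoid
  set D : Set ℝ := (fun z => dist z x₀) '' K with hD
  have hDcount : D.Countable := hKcount.image _
  have avoid : ∀ a b : ℝ, a < b → ∃ r, a < r ∧ r < b ∧ r ∉ D := by
    intro a b hab
    have : ¬ (Set.Ioo a b ⊆ D) := by
      intro hsub
      have h1 : (Set.Ioo a b).Countable := hDcount.mono hsub
      rw [← Set.countable_coe_iff, ← Cardinal.mk_le_aleph0_iff, Cardinal.mk_Ioo_real hab] at h1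
      exact Cardinal.aleph0_lt_continuum.not_ge h1
    obtain ⟨r, hr1, hr2⟩ := not_subset.mp this
    exact ⟨r, hr1.1, hr1.2, hr2⟩
  -- recursive construction of the radii
  have key : ∀ x : ℝ, 0 < x → ∀ n : ℕ, ∃ r' : ℝ, 0 < r' ∧ r' ∉ D ∧ r' < x ∧
      r' < 1/(n+1) ∧ ∃ z, z ∈ derivedSet K ∧ z ≠ x₀ ∧ dist z x₀ < x ∧ r' < dist z x₀ := by
    intro x hx n
    obtain ⟨z, hz1, hz2, hz3⟩ := hx₀acc x hx
    have hdz : 0 < dist z x₀ := dist_pos.mpr hz2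
    have hm : 0 < min (min x (1/(n+1))) (dist z x₀) := by
      refine lt_min (lt_min hx ?_) hdz
      positivity
    obtain ⟨r', hr1, hr2, hr3⟩ := avoid 0 _ hm
    refine ⟨r', hr1, hr3, ?_, ?_, z, hz1, hz2, hz3, ?_⟩
    · exact hr2.trans_le ((min_le_left _ _).trans (min_le_left _ _))
    · exact hr2.trans_le ((min_le_left _ _).trans (min_le_right _ _))
    · exact hr2.trans_le (min_le_right _ _)
  choose! step hpos hnotD hdec hsmall hwit using key
  -- initial radius
  obtain ⟨R, hRK⟩ := hK.isBounded.subset_ball x₀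
  have hR0 : 0 < R := by
    have := hRK hx₀K
    rwa [Metric.mem_ball, dist_self] at this
  obtain ⟨r0, hr01, hr02, hr03⟩ := avoid R (R+1) (lt_add_one R)
  set r : ℕ → ℝ := fun n => Nat.rec r0 (fun n x => step x n) n with hr
  have hrsucc : ∀ n, r (n+1) = step (r n) n := fun n => rfl
  have hrpos : ∀ n, 0 < r n := by
    intro n
    induction n with
    | zero => exact hR0.trans hr01
    | succ n ih => rw [hrsucc]; exact hpos _ ih n
  have hrD : ∀ n, r n ∉ D := by
    intro n
    cases n with
    | zero => exact hr03
    | succ n => rw [hrsucc]; exact hnotD _ (hrpos n) n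
  have hrdec : ∀ n, r (n+1) < r n := fun n => by rw [hrsucc]; exact hdec _ (hrpos n) n
  have hranti : ∀ m n, m ≤ n → r n ≤ r m := by
    intro m n h
    induction n with
    | zero => rw [Nat.le_zero.mp h]
    | succ n ih =>
      rcases Nat.le_succ_iff.mp h with h' | h'
      · exact (hrdec n).le.trans (ih h')
      · rw [h']
  have hrsmall : ∀ n, r (n+1) < 1/(n+1) := fun n => by
    rw [hrsucc]; exact hsmall _ (hrpos n) n
    -- the clopen neighborhoods V n and annuli A n
  set V : ℕ → Set E := fun n => K ∩ Metric.ball x₀ (r n) with hV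
  have hVmem : ∀ z n, z ∈ V n ↔ z ∈ K ∧ dist z x₀ < r n := by
    intro z n
    rw [hV]
    exact Iff.rfl
  have hVcb : ∀ n, V n = K ∩ Metric.closedBall x₀ (r n) := by
    intro n
    ext z
    rw [hVmem, Set.mem_inter_iff, Metric.mem_closedBall]
    refine and_congr_right fun hz => ⟨le_of_lt, fun h => lt_of_le_of_ne h ?_⟩
    exact fun he => hrD n ⟨z, hz, he⟩
  have hV0 : V 0 = K := by
    rw [hV]
    refine Set.inter_eq_self_of_subset_left ?_
    intro z hz
    exact Metric.mem_ball.mpr ((Metric.mem_ball.mp (hRK hz)).trans hr01)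
  have hx₀V : ∀ n, x₀ ∈ V n := fun n => (hVmem x₀ n).mpr ⟨hx₀K, by
    rw [dist_self]; exact hrpos n⟩
  have hVanti : ∀ m n, m ≤ n → V n ⊆ V m := fun m n h =>
    Set.inter_subset_inter_right _ (Metric.ball_subset_ball (hranti m n h))
  set A : ℕ → Set E := fun n => V n \ V (n+1) with hA
  have hAmem : ∀ z n, z ∈ A n ↔ z ∈ V n ∧ z ∉ V (n+1) := fun z n => Iff.rfl
  set O : ℕ → Set E := fun n => Metric.ball x₀ (r n) ∩ (Metric.closedBall x₀ (r (n+1)))ᶜ with hO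
  have hOopen : ∀ n, IsOpen (O n) := fun n =>
    Metric.isOpen_ball.inter Metric.isClosed_closedBall.isOpen_compl
  set U : ℕ → Set E := fun n => Metric.closedBall x₀ (r n) ∩ (Metric.ball x₀ (r (n+1)))ᶜ with hU
  have hUcl : ∀ n, IsClosed (U n) := fun n =>
    Metric.isClosed_closedBall.inter Metric.isOpen_ball.isClosed_compl
  have hAO : ∀ n, A n = K ∩ O n := by
    intro n
    ext z
    rw [hAmem, hVmem, hVcb (n+1), hO]
    simp only [Set.mem_inter_iff, Set.mem_compl_iff, Metric.mem_ball, Metric.mem_closedBall]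
    constructor
    · rintro ⟨⟨hzK, hzb⟩, hz2⟩
      exact ⟨hzK, hzb, fun hcb => hz2 ⟨hzK, hcb⟩⟩
    · rintro ⟨hzK, hzb, hz2⟩
      exact ⟨⟨hzK, hzb⟩, fun hzV => hz2 hzV.2⟩
  have hKOU : ∀ n, K ∩ O n = K ∩ U n := by
    intro n
    ext z
    rw [hO, hU]
    simp only [Set.mem_inter_iff, Set.mem_compl_iff, Metric.mem_ball, Metric.mem_closedBall]
    refine and_congr_right fun hz => ?_
    have e1 : dist z x₀ ≠ r n := fun he => hrD n ⟨z, hz, he⟩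
    have e2 : dist z x₀ ≠ r (n+1) := fun he => hrD (n+1) ⟨z, hz, he⟩
    exact ⟨fun ⟨h1, h2⟩ => ⟨h1.le, fun h3 => h2 h3.le⟩,
      fun ⟨h1, h2⟩ => ⟨h1.lt_of_ne e1, fun h3 => h2 (h3.lt_of_ne e2)⟩⟩
  have hAsubK : ∀ n, A n ⊆ K := fun n => by rw [hAO n]; exact Set.inter_subset_left
  have hAcl : ∀ n, IsClosed (A n) := fun n => by
    rw [hAO n, hKOU n]; exact hKcl.inter (hUcl n)
  have hAcomp : ∀ n, IsCompact (A n) := fun n =>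
    hK.of_isClosed_subset (hAcl n) (hAsubK n)
  have htrace : ∀ n, ∀ o ≤ α, cbDeriv (A n) o = cbDeriv K o ∩ O n := by
    intro n o _
    rw [hAO n]
    exact cbDeriv_trace hKcl (hOopen n) (hUcl n) (hKOU n) o
  have htrace' : ∀ n, ∀ o ≤ α, cbDeriv (A n) o = cbDeriv K o ∩ A n := by
    intro n o ho
    rw [htrace n o ho, hAO n]
    ext z
    exact ⟨fun h => ⟨h.1, cbDeriv_subset hKcl o h.1, h.2⟩, fun h => ⟨h.1, h.2.2⟩⟩
  have hx₀A : ∀ n, x₀ ∉ A n := fun n hx => ((hAmem x₀ n).mp hx).2 (hx₀V (n+1))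
  -- the partition of V n \ {x₀}
  have hpart : ∀ z, z ∈ K → z ≠ x₀ → ∀ n, z ∈ V n → ∃ k, n ≤ k ∧ z ∈ A k := by
    intro z hzK hzx n hzV
    have hex : ∃ m, z ∉ V m := by
      obtain ⟨m, hm⟩ := exists_nat_one_div_lt (dist_pos.mpr hzx)
      refine ⟨m+1, fun hzm => ?_⟩
      have := ((hVmem z (m+1)).mp hzm).2
      have h2 := (this.trans (hrsmall m)).trans hm
      exact lt_irrefl _ h2
    have hn : n < Nat.find hex := by
      rcases lt_or_ge n (Nat.find hex) with h | h
      · exact h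
      · exact absurd (hVanti _ _ h hzV) (Nat.find_spec hex)
    refine ⟨Nat.find hex - 1, by omega, (hAmem _ _).mpr ⟨?_, ?_⟩⟩
    · have := Nat.find_min hex (m := Nat.find hex - 1) (by omega)
      simpa using this
    · have : Nat.find hex - 1 + 1 = Nat.find hex := by omega
      rw [this]
      exact Nat.find_spec hex
    -- the Cantor–Bendixson characteristic of each annulus
  have hAα : ∀ n, cbDeriv (A n) α = ∅ := by
    intro n
    rw [htrace' n α le_rfl, hx₀]
    exact Set.singleton_inter_eq_empty.mpr (hx₀A n)
  set S : ℕ → Set Ordinal := fun n => {β | β ≤ α ∧ (cbDeriv (A n) β).Finite} with hS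
  have hSne : ∀ n, (S n).Nonempty := fun n =>
    ⟨α, le_rfl, by rw [hAα n]; exact Set.finite_empty⟩
  set βf : ℕ → Ordinal := fun n => sInf (S n) with hβf
  have hβmem : ∀ n, βf n ∈ S n := fun n => csInf_mem (hSne n)
  have hβle : ∀ n, βf n ≤ α := fun n => (hβmem n).1
  have hβfin : ∀ n, (cbDeriv (A n) (βf n)).Finite := fun n => (hβmem n).2
  have hβmin : ∀ n γ, γ < βf n → ¬ (cbDeriv (A n) γ).Finite := by
    intro n γ hγ hfin
    exact (csInf_le' (show γ ∈ S n from ⟨hγ.le.trans (hβle n), hfin⟩)).not_gt hγ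
  have hβlt : ∀ n, βf n < α := by
    intro n
    rcases lt_or_eq_of_le (hβle n) with hlt | heq
    · exact hlt
    · exfalso
      obtain ⟨z, hz⟩ := cbDeriv_nonempty (hAcomp n) hαpos.ne'
        (fun β hβ => hβmin n β (heq ▸ hβ))
      rw [hAα n] at hz
      exact hz
  -- each annulus contains an accumulation point of K
  have hwitA : ∀ n, ∃ z, z ∈ derivedSet K ∧ z ∈ A n := by
    intro n
    obtain ⟨z, hz1, hz2, hz3, hz4⟩ := hwit (r n) (hrpos n) n
    have hzK : z ∈ K := hKcl.closure_eq ▸ derivedSet_subset_closure K hz1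
    refine ⟨z, hz1, (hAmem z n).mpr ⟨(hVmem z n).mpr ⟨hzK, hz3⟩, fun hzV => ?_⟩⟩
    have := ((hVmem z (n+1)).mp hzV).2
    rw [hrsucc] at this
    exact absurd (hz4.trans this) (lt_irrefl _)
  have hβpos : ∀ n, 0 < βf n := by
    intro n
    rw [pos_iff_ne_zero]
    intro h0
    obtain ⟨z, hz1, hz2⟩ := hwitA n
    have h1 : z ∈ cbDeriv (A n) 1 := by
      rw [htrace' n 1 hα.le, cbDeriv_one]
      exact ⟨hz1, hz2⟩
    have hfin : (A n).Finite := by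
      have := hβfin n
      rwa [h0, cbDeriv_zero] at this
    rw [cbDeriv_one, derivedSet_of_finite hfin] at h1
    exact h1
  set p : ℕ → ℕ := fun n => (cbDeriv (A n) (βf n)).ncard with hp
  have hchar_n : ∀ n, HasCBChar (A n) (βf n) (p n) :=
    fun n => ⟨hβfin n, fun γ hγ => hβmin n γ hγ, rfl⟩
  have hppos : ∀ n, 0 < p n := by
    intro n
    have hne : (cbDeriv (A n) (βf n)).Nonempty :=
      cbDeriv_nonempty (hAcomp n) (hβpos n).ne' (fun γ hγ => hβmin n γ hγ)
    exact (Set.ncard_pos (hβfin n)).mpr hne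
  have hAcount : ∀ n, (A n).Countable := fun n => hKcount.mono (hAsubK n)
  set δ : ℕ → Ordinal := fun n => ω ^ βf n * (p n : Ordinal) with hδ
  have hom : ∀ n, ↥(A n) ≃ₜ ↥(Iic (δ n)) := fun n =>
    (H (βf n) (hβpos n) (hβlt n) (p n) (A n) (hAcomp n) (hAcount n) (hchar_n n)).some
  have hδlt : ∀ n, δ n < ω ^ α := by
    intro n
    calc ω ^ βf n * (p n : Ordinal) < ω ^ βf n * ω :=
      mul_lt_mul_of_pos_left (nat_lt_omega0 _) (opow_pos _ omega0_pos)
    _ = ω ^ (Order.succ (βf n)) := (opow_succ ω (βf n)).symm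
    _ ≤ ω ^ α := opow_le_opow_right omega0_pos (Order.succ_le_of_lt (hβlt n))
  have hδge : ∀ n, ω ^ βf n ≤ δ n := fun n =>
    Ordinal.le_mul_left _ (by exact_mod_cast hppos n)
  have hlim : Order.IsSuccLimit (ω ^ α) := by
    refine isSuccLimit_of_principal_add ?_ (principal_add_omega0_opow α)
    calc (1:Ordinal) < ω := one_lt_omega0
    _ = ω ^ (1:Ordinal) := (opow_one ω).symm
    _ ≤ ω ^ α := opow_le_opow_right omega0_pos (Ordinal.one_le_iff_ne_zero.mpr hαpos.ne')
  -- the partial sums σ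
  set σ : ℕ → Ordinal := fun n => Nat.rec 0 (fun k s => s + (δ k + 1)) n with hσ
  have hσ0 : σ 0 = 0 := rfl
  have hσsucc : ∀ n, σ (n+1) = σ n + (δ n + 1) := fun n => rfl
  have hσlt : ∀ n, σ n < ω ^ α := by
    intro n
    induction n with
    | zero => rw [hσ0]; exact opow_pos α omega0_pos
    | succ n ih =>
      rw [hσsucc]
      refine principal_add_omega0_opow α ih ?_
      rw [Ordinal.add_one_eq_succ]
      exact hlim.succ_lt (hδlt n)
  have hσmono : ∀ m n, m ≤ n → σ m ≤ σ n := by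
    intro m n hmn
    induction n with
    | zero => rw [Nat.le_zero.mp hmn]
    | succ n ih =>
      rcases Nat.le_succ_iff.mp hmn with h' | h'
      · exact (ih h').trans (by rw [hσsucc]; exact le_self_add)
      · rw [h']
  have hbig : ∀ γ, γ < α → ∀ n, ∃ k, n ≤ k ∧ ω ^ γ ≤ δ k := by
    intro γ hγ n
    have h1 : x₀ ∈ cbDeriv K (Order.succ γ) :=
      cbDeriv_anti hKcl (Order.succ_le_of_lt hγ) hx₀mem
    rw [cbDeriv_succ, mem_derivedSet, accPt_iff_nhds] at h1
    obtain ⟨z, ⟨hz1, hz2⟩, hz3⟩ := h1 (Metric.ball x₀ (r n)) (Metric.ball_mem_nhds _ (hrpos n))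
    have hzK : z ∈ K := cbDeriv_subset hKcl γ hz2
    have hzV : z ∈ V n := (hVmem z n).mpr ⟨hzK, Metric.mem_ball.mp hz1⟩
    obtain ⟨k, hk1, hk2⟩ := hpart z hzK hz3 n hzV
    have hzk : z ∈ cbDeriv (A k) γ := by
      rw [htrace' k γ hγ.le]
      exact ⟨hz2, hk2⟩
    have hγβ : γ ≤ βf k := by
      by_contra hc
      push_neg at hc
      have hsub : cbDeriv (A k) γ ⊆ cbDeriv (A k) (Order.succ (βf k)) :=
        cbDeriv_anti (hAcl k) (Order.succ_le_of_lt hc)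
      rw [cbDeriv_succ, derivedSet_of_finite (hβfin k)] at hsub
      exact hsub hzk
    exact ⟨k, hk1, (opow_le_opow_right omega0_pos hγβ).trans (hδge k)⟩
  have hσgeq : ∀ γ, γ < α → ∀ m : ℕ, ∃ n, ω ^ γ * (m : Ordinal) ≤ σ n := by
    intro γ hγ m
    induction m with
    | zero => exact ⟨0, by simp⟩
    | succ m ih =>
      obtain ⟨n, hn⟩ := ih
      obtain ⟨k, hk1, hk2⟩ := hbig γ hγ n
      refine ⟨k+1, ?_⟩
      have hcast : ((m+1 : ℕ) : Ordinal) = Order.succ (m : Ordinal) := by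
        rw [Nat.cast_add, Nat.cast_one, Ordinal.add_one_eq_succ]
      rw [hcast, mul_succ]
      calc ω ^ γ * (m : Ordinal) + ω ^ γ ≤ σ n + δ k := add_le_add hn hk2
      _ ≤ σ k + (δ k + 1) := add_le_add (hσmono n k hk1) le_self_add
      _ = σ (k+1) := (hσsucc k).symm
  have hσunb : ∀ x, x < ω ^ α → ∃ n, x < σ n := by
    intro x hx
    rcases eq_or_ne x 0 with rfl | hx0
    · refine ⟨1, ?_⟩
      have e : σ 1 = δ 0 + 1 := by
        rw [show (1:ℕ) = 0+1 from rfl, hσsucc, hσ0, zero_add]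
      rw [e]
      exact lt_of_lt_of_le zero_lt_one (le_add_self (a := 1) (b := δ 0))
    · have h1 : ω ^ Ordinal.log ω x ≤ x := opow_log_le_self ω hx0
      have hγα : Ordinal.log ω x < α :=
        (opow_lt_opow_iff_right one_lt_omega0).mp (h1.trans_lt hx)
      have h2 : x < ω ^ Order.succ (Ordinal.log ω x) := lt_opow_succ_log_self one_lt_omega0 x
      rw [opow_succ] at h2
      have hq : x / ω ^ Ordinal.log ω x < ω :=
        (Ordinal.div_lt (opow_ne_zero _ omega0_ne_zero)).mpr h2
      obtain ⟨m, hm⟩ := Ordinal.lt_omega0.mp hq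
      have h3 : x < ω ^ Ordinal.log ω x * ((m+1 : ℕ) : Ordinal) := by
        have h4 := Ordinal.lt_mul_succ_div x (opow_ne_zero (Ordinal.log ω x) omega0_ne_zero)
        rwa [hm, ← Ordinal.add_one_eq_succ, ← Nat.cast_one, ← Nat.cast_add] at h4
      obtain ⟨n, hn⟩ := hσgeq (Ordinal.log ω x) hγα (m+1)
      exact ⟨n, h3.trans_le hn⟩
    -- uniqueness of the annulus containing a point
  have huniq : ∀ z j k, z ∈ A j → z ∈ A k → j = k := by
    intro z j k hj hk
    by_contra hne
    wlog hlt : j < k generalizing j k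
    · exact this k j hk hj (Ne.symm hne) (by omega)
    exact ((hAmem z j).mp hj).2 (hVanti (j+1) k hlt (((hAmem z k).mp hk).1))
  have hvallt : ∀ (k : ℕ) (y : Ordinal), y ≤ δ k → σ k + y < ω ^ α := by
    intro k y hy
    calc σ k + y < σ k + (δ k + 1) := by
          refine add_lt_add_right ?_ _
          rw [Ordinal.add_one_eq_succ]
          exact Order.lt_succ_iff.mpr hy
    _ = σ (k+1) := (hσsucc k).symm
    _ < ω ^ α := hσlt (k+1)
  have hom_congr : ∀ j k (e : j = k) (z : E) (hj : z ∈ A j) (hk : z ∈ A k),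
      ((hom j) ⟨z, hj⟩ : Ordinal) = ((hom k) ⟨z, hk⟩ : Ordinal) := by
    rintro j k rfl z hj hk; rfl
  have hmemA : ∀ z : ↥K, (z:E) ≠ x₀ → ∃ k, (z:E) ∈ A k := by
    intro z hz
    obtain ⟨k, _, hk⟩ := hpart z z.2 hz 0 (by rw [hV0]; exact z.2)
    exact ⟨k, hk⟩
  choose kk hkk using hmemA
  obtain ⟨f, hf1, hf2⟩ : ∃ f : ↥K → ↥(Iic (ω ^ α)),
      (∀ z : ↥K, (z:E) = x₀ → f z = ⟨ω ^ α, Set.self_mem_Iic⟩) ∧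
      (∀ (z : ↥K) (k : ℕ) (hk : (z:E) ∈ A k),
        (f z : Ordinal) = σ k + ((hom k) ⟨(z:E), hk⟩ : Ordinal)) := by
    refine ⟨fun z => if hz : (z:E) = x₀ then ⟨ω ^ α, Set.self_mem_Iic⟩ else
      ⟨σ (kk z hz) + ((hom (kk z hz)) ⟨(z:E), hkk z hz⟩ : Ordinal),
        (hvallt _ _ ((hom (kk z hz)) ⟨(z:E), hkk z hz⟩).2).le⟩,
      fun z hz => dif_pos hz, ?_⟩
    intro z k hk
    have hz : (z:E) ≠ x₀ := fun he => hx₀A k (he ▸ hk)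
    have e : kk z hz = k := huniq _ _ _ (hkk z hz) hk
    simp only [dif_neg hz]
    exact congrArg₂ (· + ·) (congrArg σ e) (hom_congr _ _ e _ _ hk)
  have hflt : ∀ (z : ↥K), (z:E) ≠ x₀ → (f z : Ordinal) < ω ^ α := by
    intro z hz
    rw [hf2 z (kk z hz) (hkk z hz)]
    exact hvallt _ _ ((hom (kk z hz)) ⟨(z:E), hkk z hz⟩).2
  have hbounds : ∀ (z : ↥K) (k : ℕ), (z:E) ∈ A k →
      σ k ≤ (f z : Ordinal) ∧ (f z : Ordinal) < σ (k+1) := by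
    intro z k hk
    rw [hf2 z k hk]
    refine ⟨le_self_add, ?_⟩
    rw [hσsucc]
    refine add_lt_add_right ?_ _
    rw [Ordinal.add_one_eq_succ]
    exact Order.lt_succ_iff.mpr ((hom k) ⟨(z:E), hk⟩).2
  have hinj : Function.Injective f := by
    intro z w he
    by_cases hz : (z:E) = x₀ <;> by_cases hw : (w:E) = x₀
    · exact Subtype.ext (hz.trans hw.symm)
    · exfalso
      have h1 := hflt w hw
      rw [← he, hf1 z hz] at h1
      exact lt_irrefl _ h1
    · exfalso
      have h1 := hflt z hz
      rw [he, hf1 w hw] at h1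
      exact lt_irrefl _ h1
    · have hzk := hkk z hz
      have hwk := hkk w hw
      have hv : (f z : Ordinal) = (f w : Ordinal) := by rw [he]
      have hjk : kk z hz = kk w hw := by
        by_contra hne
        rcases Nat.lt_or_ge (kk z hz) (kk w hw) with hlt | hge
        · have h1 := (hbounds z _ hzk).2
          have h2 := (hbounds w _ hwk).1
          rw [hv] at h1
          exact lt_irrefl _ (h1.trans_le ((hσmono _ _ hlt).trans h2))
        · have hlt : kk w hw < kk z hz := by omega
          have h1 := (hbounds w _ hwk).2
          have h2 := (hbounds z _ hzk).1
          rw [← hv] at h1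
          exact lt_irrefl _ (h1.trans_le ((hσmono _ _ hlt).trans h2))
      have hwj : (w:E) ∈ A (kk z hz) := hjk ▸ hwk
      rw [hf2 z _ hzk, hf2 w _ hwj] at hv
      have hvv := (add_right_inj _).mp hv
      have h9 := (hom (kk z hz)).injective (Subtype.ext hvv)
      have h10 : (z:E) = (w:E) := congrArg (fun t : ↥(A (kk z hz)) => (t : E)) h9
      exact Subtype.ext h10
  have hsurj : Function.Surjective f := by
    intro x
    rcases eq_or_lt_of_le (Set.mem_Iic.mp x.2) with hx | hx
    · exact ⟨⟨x₀, hx₀K⟩, Subtype.ext (by rw [hf1 ⟨x₀, hx₀K⟩ rfl]; exact hx.symm)⟩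
    · have hex : ∃ n, (x:Ordinal) < σ n := hσunb x hx
      have hm0 : Nat.find hex ≠ 0 := by
        intro h0
        have h1 := Nat.find_spec hex
        rw [h0, hσ0] at h1
        exact not_lt_zero h1
      have hk2 : (x:Ordinal) < σ (Nat.find hex - 1 + 1) := by
        rw [show Nat.find hex - 1 + 1 = Nat.find hex by omega]
        exact Nat.find_spec hex
      have hk1 : σ (Nat.find hex - 1) ≤ x :=
        not_lt.mp (Nat.find_min hex (by omega))
      set k := Nat.find hex - 1
      have hy1 : σ k + ((x:Ordinal) - σ k) = x := Ordinal.add_sub_cancel_of_le hk1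
      have hy2 : (x:Ordinal) - σ k ≤ δ k := by
        have h5 : σ k + ((x:Ordinal) - σ k) < σ k + (δ k + 1) := by
          rw [hy1, ← hσsucc]
          exact hk2
        have h6 := (add_lt_add_iff_left (σ k)).mp h5
        rwa [Ordinal.add_one_eq_succ, Order.lt_succ_iff] at h6
      set w := (hom k).symm ⟨(x:Ordinal) - σ k, hy2⟩ with hwdef
      refine ⟨⟨(w:E), hAsubK k w.2⟩, Subtype.ext ?_⟩
      rw [hf2 ⟨(w:E), hAsubK k w.2⟩ k w.2]
      have h7 : (hom k) ⟨(w:E), w.2⟩ = ⟨(x:Ordinal) - σ k, hy2⟩ := by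
        rw [show (⟨(w:E), w.2⟩ : ↥(A k)) = w from rfl, hwdef]
        exact (hom k).apply_symm_apply _
      rw [h7]
      exact hy1
  -- continuity
  have hcont : Continuous f := by
    rw [continuous_iff_continuousAt]
    intro z
    by_cases hz : (z:E) = x₀
    · rw [ContinuousAt, hf1 z hz, Filter.tendsto_def]
      intro Uset hU
      rw [nhds_subtype_eq_comap, Filter.mem_comap] at hU
      obtain ⟨Oset, hO1, hO2⟩ := hU
      obtain ⟨l, hl1, hl2⟩ := exists_Ioc_subset_of_mem_nhds hO1 ⟨0, opow_pos α omega0_pos⟩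
      obtain ⟨n, hn⟩ := hσunb l hl1
      have hWopen : IsOpen ((Subtype.val : ↥K → E) ⁻¹' Metric.ball x₀ (r n)) :=
        Metric.isOpen_ball.preimage continuous_subtype_val
      have hzW : z ∈ (Subtype.val : ↥K → E) ⁻¹' Metric.ball x₀ (r n) := by
        simp only [Set.mem_preimage, Metric.mem_ball, hz, dist_self]
        exact hrpos n
      refine Filter.mem_of_superset (hWopen.mem_nhds hzW) ?_
      intro w hwW
      refine Set.mem_preimage.mpr (hO2 (Set.mem_preimage.mpr (hl2 ?_)))
      by_cases hwx : (w:E) = x₀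
      · rw [hf1 w hwx]
        exact ⟨hl1, le_rfl⟩
      · have hwV : (w:E) ∈ V n := (hVmem _ n).mpr ⟨w.2, hwW⟩
        obtain ⟨k, hk1, hk2⟩ := hpart (w:E) w.2 hwx n hwV
        refine ⟨hn.trans_le ((hσmono n k hk1).trans (hbounds w k hk2).1), (f w).2⟩
    · have hzA : (z:E) ∈ A (kk z hz) := hkk z hz
      have hBopen : IsOpen ((Subtype.val : ↥K → E) ⁻¹' O (kk z hz)) :=
        (hOopen _).preimage continuous_subtype_val
      have hzB : z ∈ (Subtype.val : ↥K → E) ⁻¹' O (kk z hz) := by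
        have := hzA
        rw [hAO] at this
        exact this.2
      refine ContinuousOn.continuousAt ?_ (hBopen.mem_nhds hzB)
      rw [continuousOn_iff_continuous_restrict]
      have hmem : ∀ w : ↥((Subtype.val : ↥K → E) ⁻¹' O (kk z hz)),
          ((w : ↥K) : E) ∈ A (kk z hz) := by
        intro w
        rw [hAO]
        exact ⟨(w : ↥K).2, w.2⟩
      have hres : ((Subtype.val : ↥K → E) ⁻¹' O (kk z hz)).restrict f =
          fun w : ↥((Subtype.val : ↥K → E) ⁻¹' O (kk z hz)) =>
          (⟨σ (kk z hz) + ((hom (kk z hz)) ⟨((w : ↥K) : E), hmem w⟩ : Ordinal),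
            (hvallt _ _ ((hom (kk z hz)) ⟨((w : ↥K) : E), hmem w⟩).2).le⟩ :
            ↥(Iic (ω ^ α))) := by
        funext w
        exact Subtype.ext (hf2 (w : ↥K) (kk z hz) (hmem w))
      change Continuous (((Subtype.val : ↥K → E) ⁻¹' O (kk z hz)).restrict f)
      rw [hres]
      have hadd : Continuous (fun y : Ordinal => σ (kk z hz) + y) :=
        ((Order.isNormal_iff_strictMono_and_continuous).mp (isNormal_add_right (σ (kk z hz)))).2
      refine Continuous.subtype_mk ?_ _
      refine hadd.comp (continuous_subtype_val.comp ((hom (kk z hz)).continuous.comp ?_))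
      exact Continuous.subtype_mk (continuous_subtype_val.comp continuous_subtype_val) _
  haveI : CompactSpace ↥K := isCompact_iff_compactSpace.mp hK
  exact ⟨Continuous.homeoOfEquivCompactToT2 (f := Equiv.ofBijective f ⟨hinj, hsurj⟩) hcont⟩
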